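/- Let Λ₁ be a row-finite k₁-graph with no sources and Λ₂ a row-finite k₂-graph with no sources. Then the cartesian product (k₁+k₂)-graph Λ₁ × Λ₂ is strongly aperiodic if and only if both Λ₁ and Λ₂ are strongly aperiodic. -/

import Mathlib

set_option autoImplicit false

open scoped Classical

/-- A `k`-graph: a countable small category together with a degree functor
`d : Λ → ℕ^k` satisfying the unique factorization property.  Paths (morphisms)
form a single type; vertices (objects) are identified with the paths of
degree `0`. -/
structure KGraph (k : ℕ) where
  /-- the type of paths (morphisms) of the `k`-graph -/
  Path : Type
  countable : Countable Path
  nonempty : Nonempty Path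
  /-- the range (codomain) vertex of a path -/
  r : Path → Path
  /-- the source (domain) vertex of a path -/
  s : Path → Path
  /-- composition: `comp lam mu` is the path `λμ`, meaningful when `s lam = r mu` -/
  comp : Path → Path → Path
  /-- the degree functor -/
  d : Path → Fin k → ℕ
  d_r : ∀ lam, d (r lam) = 0
  d_s : ∀ lam, d (s lam) = 0
  r_r : ∀ lam, r (r lam) = r lam
  s_r : ∀ lam, s (r lam) = r lam
  r_s : ∀ lam, r (s lam) = s lam
  s_s : ∀ lam, s (s lam) = s lam
  id_comp : ∀ lam, comp (r lam) lam = lam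
  comp_id : ∀ lam, comp lam (s lam) = lam
  r_comp : ∀ lam mu, s lam = r mu → r (comp lam mu) = r lam
  s_comp : ∀ lam mu, s lam = r mu → s (comp lam mu) = s mu
  d_comp : ∀ lam mu, s lam = r mu → d (comp lam mu) = d lam + d mu
  comp_assoc : ∀ lam mu nu, s lam = r mu → s mu = r nu →
    comp (comp lam mu) nu = comp lam (comp mu nu)
  /-- the unique factorization property -/
  factor : ∀ lam (m n : Fin k → ℕ), d lam = m + n →
    ∃! p : Path × Path, s p.1 = r p.2 ∧ comp p.1 p.2 = lam ∧ d p.1 = m ∧ d p.2 = n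

namespace KGraph

variable {k : ℕ}

/-- `v` is a vertex, i.e. an element of `Λ⁰`. -/
def IsVertex (Λ : KGraph k) (v : Λ.Path) : Prop := Λ.d v = 0

/-- `v ≤ w`, i.e. `vΛw ≠ ∅`. -/
def Conn (Λ : KGraph k) (v w : Λ.Path) : Prop := ∃ lam, Λ.r lam = v ∧ Λ.s lam = w

/-- the canonical generator `e i` of `ℕ^k`. -/
def eVec (k : ℕ) (i : Fin k) : Fin k → ℕ := Pi.single i 1

/-- `Λ` is row-finite: `vΛⁿ` is finite for every vertex `v` and `n ∈ ℕ^k`. -/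
def RowFinite (Λ : KGraph k) : Prop :=
  ∀ v, Λ.IsVertex v → ∀ n : Fin k → ℕ, {lam | Λ.r lam = v ∧ Λ.d lam = n}.Finite

/-- `Λ` has no sources: `vΛ^{e i} ≠ ∅` for every vertex `v` and `i`. -/
def NoSources (Λ : KGraph k) : Prop :=
  ∀ v, Λ.IsVertex v → ∀ i : Fin k, ∃ lam, Λ.r lam = v ∧ Λ.d lam = eVec k i

/-- the middle factor `λ(m,n)`: the unique `σ` such that `λ = μστ` with
`d μ = m`, `d σ = n - m`, `d τ = d λ - n` (junk value if no factorization exists). -/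
noncomputable def seg (Λ : KGraph k) (lam : Λ.Path) (m n : Fin k → ℕ) : Λ.Path :=
  if h : ∃ sig, ∃ mu tau, Λ.s mu = Λ.r sig ∧ Λ.s sig = Λ.r tau ∧
      Λ.comp (Λ.comp mu sig) tau = lam ∧ Λ.d mu = m ∧ Λ.d sig = n - m ∧
      Λ.d tau = Λ.d lam - n
  then h.choose else lam

/-- `Λ` has no local periodicity at the vertex `v`. -/
def NoLocalPeriodicity (Λ : KGraph k) (v : Λ.Path) : Prop :=
  ∀ m n : Fin k → ℕ, m ≠ n →
    ∃ lam, Λ.r lam = v ∧ m ⊔ n ≤ Λ.d lam ∧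
      Λ.seg lam m (m + Λ.d lam - (m ⊔ n)) ≠ Λ.seg lam n (n + Λ.d lam - (m ⊔ n))

/-- `Λ` is aperiodic: no vertex has local periodicity. -/
def Aperiodic (Λ : KGraph k) : Prop := ∀ v, Λ.IsVertex v → Λ.NoLocalPeriodicity v

/-- a hereditary set of vertices -/
def Hereditary (Λ : KGraph k) (H : Set Λ.Path) : Prop :=
  ∀ v ∈ H, ∀ w, Λ.Conn v w → w ∈ H

/-- a saturated set of vertices -/
def Saturated (Λ : KGraph k) (H : Set Λ.Path) : Prop :=
  ∀ v, Λ.IsVertex v → (∃ mu, Λ.r mu = v) →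
    (∃ i : Fin k, ∀ lam, Λ.r lam = v → Λ.d lam = eVec k i → Λ.s lam ∈ H) → v ∈ H

/-- the saturation of a set of vertices: the smallest saturated set containing it -/
def saturation (Λ : KGraph k) (H : Set Λ.Path) : Set Λ.Path :=
  ⋂₀ {K : Set Λ.Path | H ⊆ K ∧ Λ.Saturated K}

/-- no local periodicity at the vertex `v` of the quotient graph `Γ(Λ \ H)`
(whose paths are the paths of `Λ` with source outside `H`). -/
def QuotNoLocalPeriodicity (Λ : KGraph k) (H : Set Λ.Path) (v : Λ.Path) : Prop :=
  ∀ m n : Fin k → ℕ, m ≠ n →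
    ∃ lam, Λ.r lam = v ∧ Λ.s lam ∉ H ∧ m ⊔ n ≤ Λ.d lam ∧
      Λ.seg lam m (m + Λ.d lam - (m ⊔ n)) ≠ Λ.seg lam n (n + Λ.d lam - (m ⊔ n))

/-- `Λ` is strongly aperiodic: `Γ(Λ \ H)` is aperiodic for every saturated
hereditary proper subset `H ⊊ Λ⁰`. -/
def StronglyAperiodic (Λ : KGraph k) : Prop :=
  ∀ H : Set Λ.Path, (∀ v ∈ H, Λ.IsVertex v) → Λ.Hereditary H → Λ.Saturated H →
    H ≠ {v | Λ.IsVertex v} →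
    ∀ v, Λ.IsVertex v → v ∉ H → Λ.QuotNoLocalPeriodicity H v

/-- a maximal tail -/
def MaximalTail (Λ : KGraph k) (γ : Set Λ.Path) : Prop :=
  γ.Nonempty ∧ (∀ v ∈ γ, Λ.IsVertex v) ∧
  (∀ v₁ ∈ γ, ∀ v₂ ∈ γ, ∃ w ∈ γ, Λ.Conn v₁ w ∧ Λ.Conn v₂ w) ∧
  (∀ v ∈ γ, ∀ i : Fin k, ∃ f, Λ.r f = v ∧ Λ.d f = eVec k i ∧ Λ.s f ∈ γ) ∧
  (∀ v, Λ.IsVertex v → ∀ w ∈ γ, Λ.Conn v w → v ∈ γ)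

end KGraph

namespace KGraph

section ProductGraph

variable {k₁ k₂ : ℕ}

private lemma fin_append_zero :
    Fin.append (0 : Fin k₁ → ℕ) (0 : Fin k₂ → ℕ) = 0 := by
  funext i
  refine Fin.addCases (fun j => ?_) (fun j => ?_) i <;>
    simp [Fin.append_left, Fin.append_right]

private lemma fin_append_add (f f' : Fin k₁ → ℕ) (g g' : Fin k₂ → ℕ) :
    Fin.append (f + f') (g + g') = Fin.append f g + Fin.append f' g' := by
  funext i
  refine Fin.addCases (fun j => ?_) (fun j => ?_) i <;>
    simp [Fin.append_left, Fin.append_right]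

private lemma fin_append_restrict (m : Fin (k₁ + k₂) → ℕ) :
    Fin.append (fun i => m (Fin.castAdd k₂ i)) (fun j => m (Fin.natAdd k₁ j)) = m := by
  funext i
  refine Fin.addCases (fun j => ?_) (fun j => ?_) i <;>
    simp [Fin.append_left, Fin.append_right]

/-- The cartesian product of a `k₁`-graph and a `k₂`-graph, a `(k₁+k₂)`-graph. -/
noncomputable def prod (Λ₁ : KGraph k₁) (Λ₂ : KGraph k₂) : KGraph (k₁ + k₂) where
  Path := Λ₁.Path × Λ₂.Path
  countable := by have := Λ₁.countable; have := Λ₂.countable; exact inferInstance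
  nonempty := by have := Λ₁.nonempty; have := Λ₂.nonempty; exact inferInstance
  r := fun p => (Λ₁.r p.1, Λ₂.r p.2)
  s := fun p => (Λ₁.s p.1, Λ₂.s p.2)
  comp := fun p q => (Λ₁.comp p.1 q.1, Λ₂.comp p.2 q.2)
  d := fun p => Fin.append (Λ₁.d p.1) (Λ₂.d p.2)
  d_r := fun p => by dsimp only; rw [Λ₁.d_r, Λ₂.d_r]; exact fin_append_zero
  d_s := fun p => by dsimp only; rw [Λ₁.d_s, Λ₂.d_s]; exact fin_append_zero
  r_r := fun p => by dsimp only; rw [Λ₁.r_r, Λ₂.r_r]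
  s_r := fun p => by dsimp only; rw [Λ₁.s_r, Λ₂.s_r]
  r_s := fun p => by dsimp only; rw [Λ₁.r_s, Λ₂.r_s]
  s_s := fun p => by dsimp only; rw [Λ₁.s_s, Λ₂.s_s]
  id_comp := fun p => by dsimp only; rw [Λ₁.id_comp, Λ₂.id_comp]
  comp_id := fun p => by dsimp only; rw [Λ₁.comp_id, Λ₂.comp_id]
  r_comp := fun p q h => by
    dsimp only
    have h1 : Λ₁.s p.1 = Λ₁.r q.1 := congrArg Prod.fst h
    have h2 : Λ₂.s p.2 = Λ₂.r q.2 := congrArg Prod.snd h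
    rw [Λ₁.r_comp _ _ h1, Λ₂.r_comp _ _ h2]
  s_comp := fun p q h => by
    dsimp only
    have h1 : Λ₁.s p.1 = Λ₁.r q.1 := congrArg Prod.fst h
    have h2 : Λ₂.s p.2 = Λ₂.r q.2 := congrArg Prod.snd h
    rw [Λ₁.s_comp _ _ h1, Λ₂.s_comp _ _ h2]
  d_comp := fun p q h => by
    dsimp only
    have h1 : Λ₁.s p.1 = Λ₁.r q.1 := congrArg Prod.fst h
    have h2 : Λ₂.s p.2 = Λ₂.r q.2 := congrArg Prod.snd h
    rw [Λ₁.d_comp _ _ h1, Λ₂.d_comp _ _ h2, fin_append_add]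
  comp_assoc := fun p q t h h' => by
    dsimp only
    have h1 : Λ₁.s p.1 = Λ₁.r q.1 := congrArg Prod.fst h
    have h2 : Λ₂.s p.2 = Λ₂.r q.2 := congrArg Prod.snd h
    have h1' : Λ₁.s q.1 = Λ₁.r t.1 := congrArg Prod.fst h'
    have h2' : Λ₂.s q.2 = Λ₂.r t.2 := congrArg Prod.snd h'
    rw [Λ₁.comp_assoc _ _ _ h1 h1', Λ₂.comp_assoc _ _ _ h2 h2']
  factor := fun p m n hmn => by
    have h1 : Λ₁.d p.1 =
        (fun i => m (Fin.castAdd k₂ i)) + (fun i => n (Fin.castAdd k₂ i)) := by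
      funext i
      have := congrFun hmn (Fin.castAdd k₂ i)
      simpa [Fin.append_left] using this
    have h2 : Λ₂.d p.2 =
        (fun j => m (Fin.natAdd k₁ j)) + (fun j => n (Fin.natAdd k₁ j)) := by
      funext j
      have := congrFun hmn (Fin.natAdd k₁ j)
      simpa [Fin.append_right] using this
    obtain ⟨q₁, ⟨hq₁s, hq₁c, hq₁m, hq₁n⟩, hq₁u⟩ := Λ₁.factor p.1 _ _ h1
    obtain ⟨q₂, ⟨hq₂s, hq₂c, hq₂m, hq₂n⟩, hq₂u⟩ := Λ₂.factor p.2 _ _ h2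
    refine ⟨((q₁.1, q₂.1), (q₁.2, q₂.2)), ⟨?_, ?_, ?_, ?_⟩, ?_⟩
    · show (Λ₁.s q₁.1, Λ₂.s q₂.1) = (Λ₁.r q₁.2, Λ₂.r q₂.2)
      rw [hq₁s, hq₂s]
    · show (Λ₁.comp q₁.1 q₁.2, Λ₂.comp q₂.1 q₂.2) = p
      rw [hq₁c, hq₂c]
    · show Fin.append (Λ₁.d q₁.1) (Λ₂.d q₂.1) = m
      rw [hq₁m, hq₂m]; exact fin_append_restrict m
    · show Fin.append (Λ₁.d q₁.2) (Λ₂.d q₂.2) = n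
      rw [hq₁n, hq₂n]; exact fin_append_restrict n
    · rintro ⟨⟨a, b⟩, ⟨c, e⟩⟩ ⟨hs, hc, hm, hn⟩
      have hs1 : Λ₁.s a = Λ₁.r c := congrArg Prod.fst hs
      have hs2 : Λ₂.s b = Λ₂.r e := congrArg Prod.snd hs
      have hc1 : Λ₁.comp a c = p.1 := congrArg Prod.fst hc
      have hc2 : Λ₂.comp b e = p.2 := congrArg Prod.snd hc
      have hm1 : Λ₁.d a = fun i => m (Fin.castAdd k₂ i) := by
        funext i
        have := congrFun hm (Fin.castAdd k₂ i)
        simpa [Fin.append_left] using this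
      have hm2 : Λ₂.d b = fun j => m (Fin.natAdd k₁ j) := by
        funext j
        have := congrFun hm (Fin.natAdd k₁ j)
        simpa [Fin.append_right] using this
      have hn1 : Λ₁.d c = fun i => n (Fin.castAdd k₂ i) := by
        funext i
        have := congrFun hn (Fin.castAdd k₂ i)
        simpa [Fin.append_left] using this
      have hn2 : Λ₂.d e = fun j => n (Fin.natAdd k₁ j) := by
        funext j
        have := congrFun hn (Fin.natAdd k₁ j)
        simpa [Fin.append_right] using this
      have e1 : (a, c) = q₁ := hq₁u (a, c) ⟨hs1, hc1, hm1, hn1⟩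
      have e2 : (b, e) = q₂ := hq₂u (b, e) ⟨hs2, hc2, hm2, hn2⟩
      have ea : a = q₁.1 := congrArg Prod.fst e1
      have ec : c = q₁.2 := congrArg Prod.snd e1
      have eb : b = q₂.1 := congrArg Prod.fst e2
      have ee : e = q₂.2 := congrArg Prod.snd e2
      subst ea; subst ec; subst eb; subst ee
      rfl

end ProductGraph

end KGraph

namespace KGraph

section GeneralLemmas

variable {k : ℕ} (Λ : KGraph k)

lemma eq_r_of_d_eq_zero {lam : Λ.Path} (h : Λ.d lam = 0) : lam = Λ.r lam := by
  obtain ⟨p, _, hu⟩ := Λ.factor lam 0 0 (by rw [h, add_zero])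
  have h1 : ((Λ.r lam, lam) : Λ.Path × Λ.Path) = p :=
    hu _ ⟨Λ.s_r lam, Λ.id_comp lam, Λ.d_r lam, h⟩
  have h2 : ((lam, Λ.s lam) : Λ.Path × Λ.Path) = p :=
    hu _ ⟨(Λ.r_s lam).symm, Λ.comp_id lam, h, Λ.d_s lam⟩
  exact (congrArg Prod.fst (h1.trans h2.symm)).symm

lemma r_vertex {v : Λ.Path} (h : Λ.IsVertex v) : Λ.r v = v :=
  (Λ.eq_r_of_d_eq_zero h).symm

lemma s_vertex {v : Λ.Path} (h : Λ.IsVertex v) : Λ.s v = v := by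
  conv_lhs => rw [Λ.eq_r_of_d_eq_zero h]
  rw [Λ.s_r, Λ.r_vertex h]

/-- the specification of a middle segment -/
def IsSeg (lam : Λ.Path) (m n : Fin k → ℕ) (sig : Λ.Path) : Prop :=
  ∃ mu tau, Λ.s mu = Λ.r sig ∧ Λ.s sig = Λ.r tau ∧
    Λ.comp (Λ.comp mu sig) tau = lam ∧ Λ.d mu = m ∧ Λ.d sig = n - m ∧
    Λ.d tau = Λ.d lam - n

lemma isSeg_unique {lam : Λ.Path} {m n : Fin k → ℕ} {sig sig' : Λ.Path}
    (h : Λ.IsSeg lam m n sig) (h' : Λ.IsSeg lam m n sig') : sig = sig' := by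
  obtain ⟨mu, tau, h1, h2, h3, h4, h5, h6⟩ := h
  obtain ⟨mu', tau', h1', h2', h3', h4', h5', h6'⟩ := h'
  have hds : Λ.s (Λ.comp mu sig) = Λ.r tau := by rw [Λ.s_comp _ _ h1, h2]
  have hdl : Λ.d lam = m + ((n - m) + (Λ.d lam - n)) := by
    conv_lhs => rw [← h3]
    rw [Λ.d_comp _ _ hds, Λ.d_comp _ _ h1, h4, h5, h6, add_assoc]
  obtain ⟨p, _, hu⟩ := Λ.factor lam m ((n - m) + (Λ.d lam - n)) hdl
  have hx : ((mu, Λ.comp sig tau) : Λ.Path × Λ.Path) = p := by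
    refine hu _ ⟨?_, ?_, h4, ?_⟩
    · rw [h1, Λ.r_comp _ _ h2]
    · rw [← Λ.comp_assoc _ _ _ h1 h2, h3]
    · rw [Λ.d_comp _ _ h2, h5, h6]
  have hx' : ((mu', Λ.comp sig' tau') : Λ.Path × Λ.Path) = p := by
    refine hu _ ⟨?_, ?_, h4', ?_⟩
    · rw [h1', Λ.r_comp _ _ h2']
    · rw [← Λ.comp_assoc _ _ _ h1' h2', h3']
    · rw [Λ.d_comp _ _ h2', h5', h6']
  have hrho : Λ.comp sig tau = Λ.comp sig' tau' :=
    congrArg Prod.snd (hx.trans hx'.symm)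
  have hdrho : Λ.d (Λ.comp sig tau) = (n - m) + (Λ.d lam - n) := by
    rw [Λ.d_comp _ _ h2, h5, h6]
  obtain ⟨q, _, hv⟩ := Λ.factor (Λ.comp sig tau) (n - m) (Λ.d lam - n) hdrho
  have hy : ((sig, tau) : Λ.Path × Λ.Path) = q := hv _ ⟨h2, rfl, h5, h6⟩
  have hy' : ((sig', tau') : Λ.Path × Λ.Path) = q := hv _ ⟨h2', hrho.symm, h5', h6'⟩
  exact congrArg Prod.fst (hy.trans hy'.symm)

lemma seg_eq {lam : Λ.Path} {m n : Fin k → ℕ} {sig : Λ.Path}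
    (h : Λ.IsSeg lam m n sig) : Λ.seg lam m n = sig := by
  have hex : ∃ sig, ∃ mu tau, Λ.s mu = Λ.r sig ∧ Λ.s sig = Λ.r tau ∧
      Λ.comp (Λ.comp mu sig) tau = lam ∧ Λ.d mu = m ∧ Λ.d sig = n - m ∧
      Λ.d tau = Λ.d lam - n := ⟨sig, h⟩
  unfold seg
  rw [dif_pos hex]
  exact Λ.isSeg_unique hex.choose_spec h

lemma exists_isSeg {lam : Λ.Path} {m n : Fin k → ℕ}
    (h1 : m ≤ n) (h2 : n ≤ Λ.d lam) : ∃ sig, Λ.IsSeg lam m n sig := by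
  have hml : m ≤ Λ.d lam := le_trans h1 h2
  have hd1 : Λ.d lam = m + (Λ.d lam - m) := by
    funext i
    have h3 : m i ≤ Λ.d lam i := hml i
    simp only [Pi.add_apply, Pi.sub_apply]
    omega
  obtain ⟨⟨mu, rho⟩, ⟨hs, hc, hdm, hdr⟩, _⟩ := Λ.factor lam m (Λ.d lam - m) hd1
  have hd2 : Λ.d rho = (n - m) + (Λ.d lam - n) := by
    rw [hdr]
    funext i
    have h3 : m i ≤ n i := h1 i
    have h4 : n i ≤ Λ.d lam i := h2 i
    simp only [Pi.add_apply, Pi.sub_apply]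
    omega
  obtain ⟨⟨sig, tau⟩, ⟨hs', hc', hds, hdt⟩, _⟩ := Λ.factor rho (n - m) (Λ.d lam - n) hd2
  have hms : Λ.s mu = Λ.r sig := by rw [hs, ← hc', Λ.r_comp _ _ hs']
  refine ⟨sig, mu, tau, hms, hs', ?_, hdm, hds, hdt⟩
  rw [Λ.comp_assoc _ _ _ hms hs', hc', hc]

lemma exists_path_avoid_aux {S : Set Λ.Path} (hS : Λ.Saturated S) :
    ∀ N (v : Λ.Path), Λ.IsVertex v → v ∉ S → ∀ n : Fin k → ℕ, (∑ i, n i) = N →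
      ∃ lam, Λ.r lam = v ∧ Λ.d lam = n ∧ Λ.s lam ∉ S := by
  intro N
  induction N with
  | zero =>
    intro v hv hvS n hn
    have hn0 : n = 0 := by
      funext i
      exact (Finset.sum_eq_zero_iff.mp hn) i (Finset.mem_univ i)
    refine ⟨v, Λ.r_vertex hv, ?_, ?_⟩
    · rw [hn0]; exact hv
    · rw [Λ.s_vertex hv]; exact hvS
  | succ N ih =>
    intro v hv hvS n hn
    have hex : ∃ i, n i ≠ 0 := by
      by_contra hc
      push_neg at hc
      simp [hc] at hn
    obtain ⟨i, hi⟩ := hex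
    have hstep : ∃ g, Λ.r g = v ∧ Λ.d g = eVec k i ∧ Λ.s g ∉ S := by
      by_contra hc
      push_neg at hc
      exact hvS (hS v hv ⟨v, Λ.r_vertex hv⟩ ⟨i, hc⟩)
    obtain ⟨g, hg1, hg2, hg3⟩ := hstep
    set n' : Fin k → ℕ := Function.update n i (n i - 1) with hn'
    have hsum' : (∑ j, n' j) = N := by
      rw [hn', Finset.sum_update_of_mem (Finset.mem_univ i)]
      rw [Finset.sum_eq_sum_sdiff_singleton_add (Finset.mem_univ i) n] at hn
      omega
    obtain ⟨lam', hl1, hl2, hl3⟩ := ih (Λ.s g) (Λ.d_s g) hg3 n' hsum'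
    refine ⟨Λ.comp g lam', ?_, ?_, ?_⟩
    · rw [Λ.r_comp _ _ hl1.symm, hg1]
    · rw [Λ.d_comp _ _ hl1.symm, hg2, hl2]
      funext j
      simp only [Pi.add_apply, eVec, Pi.single_apply, hn', Function.update_apply]
      rcases eq_or_ne j i with hj | hj
      · subst hj; simp; omega
      · simp [hj]
    · rw [Λ.s_comp _ _ hl1.symm]; exact hl3

lemma exists_path_avoid {S : Set Λ.Path} (hS : Λ.Saturated S) {v : Λ.Path}
    (hv : Λ.IsVertex v) (hvS : v ∉ S) (n : Fin k → ℕ) :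
    ∃ lam, Λ.r lam = v ∧ Λ.d lam = n ∧ Λ.s lam ∉ S :=
  Λ.exists_path_avoid_aux hS _ v hv hvS n rfl

end GeneralLemmas

end KGraph

namespace KGraph

section ProductLemmas

variable {k₁ k₂ : ℕ}

/-- restriction of a degree vector to the first block -/
def res1 (k₁ k₂ : ℕ) (m : Fin (k₁ + k₂) → ℕ) : Fin k₁ → ℕ := fun i => m (Fin.castAdd k₂ i)

/-- restriction of a degree vector to the second block -/
def res2 (k₁ k₂ : ℕ) (m : Fin (k₁ + k₂) → ℕ) : Fin k₂ → ℕ := fun j => m (Fin.natAdd k₁ j)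

lemma res1_append (f : Fin k₁ → ℕ) (g : Fin k₂ → ℕ) : res1 k₁ k₂ (Fin.append f g) = f :=
  funext fun i => Fin.append_left f g i

lemma res2_append (f : Fin k₁ → ℕ) (g : Fin k₂ → ℕ) : res2 k₁ k₂ (Fin.append f g) = g :=
  funext fun j => Fin.append_right f g j

lemma eVec_castAdd (i : Fin k₁) :
    eVec (k₁ + k₂) (Fin.castAdd k₂ i) = Fin.append (eVec k₁ i) (0 : Fin k₂ → ℕ) := by
  funext x
  refine Fin.addCases (fun j => ?_) (fun j => ?_) x
  · rw [Fin.append_left]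
    simp only [eVec, Pi.single_apply]
    by_cases hj : j = i
    · subst hj; simp
    · rw [if_neg (fun h => hj (by
        have := congrArg Fin.val h
        simp only [Fin.coe_castAdd] at this
        exact Fin.ext this)), if_neg hj]
  · rw [Fin.append_right]
    simp only [eVec, Pi.single_apply, Pi.zero_apply]
    rw [if_neg]
    intro h
    have := congrArg Fin.val h
    simp only [Fin.coe_castAdd, Fin.coe_natAdd] at this
    omega

lemma eVec_natAdd (i : Fin k₂) :
    eVec (k₁ + k₂) (Fin.natAdd k₁ i) = Fin.append (0 : Fin k₁ → ℕ) (eVec k₂ i) := by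
  funext x
  refine Fin.addCases (fun j => ?_) (fun j => ?_) x
  · rw [Fin.append_left]
    simp only [eVec, Pi.single_apply, Pi.zero_apply]
    rw [if_neg]
    intro h
    have := congrArg Fin.val h
    simp only [Fin.coe_castAdd, Fin.coe_natAdd] at this
    omega
  · rw [Fin.append_right]
    simp only [eVec, Pi.single_apply]
    by_cases hj : j = i
    · subst hj; simp
    · rw [if_neg (fun h => hj (by
        have := congrArg Fin.val h
        simp only [Fin.coe_natAdd] at this
        exact Fin.ext (by omega))), if_neg hj]

variable (Λ₁ : KGraph k₁) (Λ₂ : KGraph k₂)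

lemma prod_d (p : (Λ₁.prod Λ₂).Path) :
    (Λ₁.prod Λ₂).d p = Fin.append (Λ₁.d p.1) (Λ₂.d p.2) := rfl

lemma prod_isVertex_iff (p : (Λ₁.prod Λ₂).Path) :
    (Λ₁.prod Λ₂).IsVertex p ↔ Λ₁.IsVertex p.1 ∧ Λ₂.IsVertex p.2 := by
  constructor
  · intro h
    have h' : Fin.append (Λ₁.d p.1) (Λ₂.d p.2) = 0 := h
    constructor
    · funext i
      have := congrFun h' (Fin.castAdd k₂ i)
      simpa [Fin.append_left] using this
    · funext j
      have := congrFun h' (Fin.natAdd k₁ j)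
      simpa [Fin.append_right] using this
  · rintro ⟨h1, h2⟩
    show Fin.append (Λ₁.d p.1) (Λ₂.d p.2) = 0
    rw [h1, h2]
    exact fin_append_zero

lemma prod_isSeg {lam₁ sig₁ : Λ₁.Path} {lam₂ sig₂ : Λ₂.Path} {m n : Fin (k₁ + k₂) → ℕ}
    (h1 : Λ₁.IsSeg lam₁ (res1 k₁ k₂ m) (res1 k₁ k₂ n) sig₁)
    (h2 : Λ₂.IsSeg lam₂ (res2 k₁ k₂ m) (res2 k₁ k₂ n) sig₂) :
    (Λ₁.prod Λ₂).IsSeg (lam₁, lam₂) m n (sig₁, sig₂) := by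
  obtain ⟨mu₁, tau₁, a1, a2, a3, a4, a5, a6⟩ := h1
  obtain ⟨mu₂, tau₂, b1, b2, b3, b4, b5, b6⟩ := h2
  refine ⟨(mu₁, mu₂), (tau₁, tau₂), ?_, ?_, ?_, ?_, ?_, ?_⟩
  · show (Λ₁.s mu₁, Λ₂.s mu₂) = (Λ₁.r sig₁, Λ₂.r sig₂)
    rw [a1, b1]
  · show (Λ₁.s sig₁, Λ₂.s sig₂) = (Λ₁.r tau₁, Λ₂.r tau₂)
    rw [a2, b2]
  · show (Λ₁.comp (Λ₁.comp mu₁ sig₁) tau₁, Λ₂.comp (Λ₂.comp mu₂ sig₂) tau₂) = (lam₁, lam₂)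
    rw [a3, b3]
  · show Fin.append (Λ₁.d mu₁) (Λ₂.d mu₂) = m
    rw [a4, b4]
    exact fin_append_restrict m
  · show Fin.append (Λ₁.d sig₁) (Λ₂.d sig₂) = n - m
    rw [a5, b5]
    funext x
    refine Fin.addCases (fun j => ?_) (fun j => ?_) x <;>
      simp [Fin.append_left, Fin.append_right, res1, res2]
  · show Fin.append (Λ₁.d tau₁) (Λ₂.d tau₂) = (Λ₁.prod Λ₂).d (lam₁, lam₂) - n
    rw [a6, b6]
    show _ = Fin.append (Λ₁.d lam₁) (Λ₂.d lam₂) - n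
    funext x
    refine Fin.addCases (fun j => ?_) (fun j => ?_) x <;>
      simp [Fin.append_left, Fin.append_right, res1, res2]

lemma prod_seg (lam₁ : Λ₁.Path) (lam₂ : Λ₂.Path) (m n : Fin (k₁ + k₂) → ℕ)
    (hm1 : res1 k₁ k₂ m ≤ res1 k₁ k₂ n) (hn1 : res1 k₁ k₂ n ≤ Λ₁.d lam₁)
    (hm2 : res2 k₁ k₂ m ≤ res2 k₁ k₂ n) (hn2 : res2 k₁ k₂ n ≤ Λ₂.d lam₂) :
    (Λ₁.prod Λ₂).seg (lam₁, lam₂) m n =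
      (Λ₁.seg lam₁ (res1 k₁ k₂ m) (res1 k₁ k₂ n),
       Λ₂.seg lam₂ (res2 k₁ k₂ m) (res2 k₁ k₂ n)) := by
  obtain ⟨s1, h1⟩ := Λ₁.exists_isSeg hm1 hn1
  obtain ⟨s2, h2⟩ := Λ₂.exists_isSeg hm2 hn2
  rw [Λ₁.seg_eq h1, Λ₂.seg_eq h2, (Λ₁.prod Λ₂).seg_eq (prod_isSeg Λ₁ Λ₂ h1 h2)]

lemma slice2_saturated {H : Set (Λ₁.prod Λ₂).Path} (hS : (Λ₁.prod Λ₂).Saturated H)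
    {v₁ : Λ₁.Path} (hv₁ : Λ₁.IsVertex v₁) :
    Λ₂.Saturated {w₂ | ((v₁, w₂) : (Λ₁.prod Λ₂).Path) ∈ H} := by
  intro v₂ hv₂ _ hex
  obtain ⟨i, hi⟩ := hex
  refine hS (v₁, v₂) ((prod_isVertex_iff Λ₁ Λ₂ _).mpr ⟨hv₁, hv₂⟩) ⟨(v₁, v₂), ?_⟩
    ⟨Fin.natAdd k₁ i, ?_⟩
  · show (Λ₁.r v₁, Λ₂.r v₂) = (v₁, v₂)
    rw [Λ₁.r_vertex hv₁, Λ₂.r_vertex hv₂]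
  · rintro ⟨a, g⟩ hr hd
    have hd' : Fin.append (Λ₁.d a) (Λ₂.d g) = Fin.append (0 : Fin k₁ → ℕ) (eVec k₂ i) := by
      rw [← eVec_natAdd i]
      exact hd
    have hda : Λ₁.d a = 0 := by
      have := congrArg (res1 k₁ k₂) hd'
      rwa [res1_append, res1_append] at this
    have hdg : Λ₂.d g = eVec k₂ i := by
      have := congrArg (res2 k₁ k₂) hd'
      rwa [res2_append, res2_append] at this
    have hr' : (Λ₁.r a, Λ₂.r g) = ((v₁, v₂) : Λ₁.Path × Λ₂.Path) := hr
    have hra : Λ₁.r a = v₁ := congrArg Prod.fst hr'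
    have hrg : Λ₂.r g = v₂ := congrArg Prod.snd hr'
    have ha : a = v₁ := by rw [Λ₁.eq_r_of_d_eq_zero hda, hra]
    show ((Λ₁.s a, Λ₂.s g) : (Λ₁.prod Λ₂).Path) ∈ H
    rw [ha, Λ₁.s_vertex hv₁]
    exact hi g hrg hdg

lemma slice2_hereditary {H : Set (Λ₁.prod Λ₂).Path} (hH : (Λ₁.prod Λ₂).Hereditary H)
    {v₁ : Λ₁.Path} (hv₁ : Λ₁.IsVertex v₁) :
    Λ₂.Hereditary {w₂ | ((v₁, w₂) : (Λ₁.prod Λ₂).Path) ∈ H} := by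
  intro w₂ hw₂ x₂ hconn
  obtain ⟨g, hg1, hg2⟩ := hconn
  refine hH _ hw₂ _ ⟨((v₁, g) : (Λ₁.prod Λ₂).Path), ?_, ?_⟩
  · show (Λ₁.r v₁, Λ₂.r g) = (v₁, w₂)
    rw [Λ₁.r_vertex hv₁, hg1]
  · show (Λ₁.s v₁, Λ₂.s g) = (v₁, x₂)
    rw [Λ₁.s_vertex hv₁, hg2]

lemma slice1_saturated {H : Set (Λ₁.prod Λ₂).Path} (hS : (Λ₁.prod Λ₂).Saturated H)
    {v₂ : Λ₂.Path} (hv₂ : Λ₂.IsVertex v₂) :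
    Λ₁.Saturated {w₁ | ((w₁, v₂) : (Λ₁.prod Λ₂).Path) ∈ H} := by
  intro v₁ hv₁ _ hex
  obtain ⟨i, hi⟩ := hex
  refine hS (v₁, v₂) ((prod_isVertex_iff Λ₁ Λ₂ _).mpr ⟨hv₁, hv₂⟩) ⟨(v₁, v₂), ?_⟩
    ⟨Fin.castAdd k₂ i, ?_⟩
  · show (Λ₁.r v₁, Λ₂.r v₂) = (v₁, v₂)
    rw [Λ₁.r_vertex hv₁, Λ₂.r_vertex hv₂]
  · rintro ⟨f, b⟩ hr hd
    have hd' : Fin.append (Λ₁.d f) (Λ₂.d b) = Fin.append (eVec k₁ i) (0 : Fin k₂ → ℕ) := by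
      rw [← eVec_castAdd i]
      exact hd
    have hdb : Λ₂.d b = 0 := by
      have := congrArg (res2 k₁ k₂) hd'
      rwa [res2_append, res2_append] at this
    have hdf : Λ₁.d f = eVec k₁ i := by
      have := congrArg (res1 k₁ k₂) hd'
      rwa [res1_append, res1_append] at this
    have hr' : (Λ₁.r f, Λ₂.r b) = ((v₁, v₂) : Λ₁.Path × Λ₂.Path) := hr
    have hrf : Λ₁.r f = v₁ := congrArg Prod.fst hr'
    have hrb : Λ₂.r b = v₂ := congrArg Prod.snd hr'
    have hb : b = v₂ := by rw [Λ₂.eq_r_of_d_eq_zero hdb, hrb]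
    show ((Λ₁.s f, Λ₂.s b) : (Λ₁.prod Λ₂).Path) ∈ H
    rw [hb, Λ₂.s_vertex hv₂]
    exact hi f hrf hdf

lemma slice1_hereditary {H : Set (Λ₁.prod Λ₂).Path} (hH : (Λ₁.prod Λ₂).Hereditary H)
    {v₂ : Λ₂.Path} (hv₂ : Λ₂.IsVertex v₂) :
    Λ₁.Hereditary {w₁ | ((w₁, v₂) : (Λ₁.prod Λ₂).Path) ∈ H} := by
  intro w₁ hw₁ x₁ hconn
  obtain ⟨f, hf1, hf2⟩ := hconn
  refine hH _ hw₁ _ ⟨((f, v₂) : (Λ₁.prod Λ₂).Path), ?_, ?_⟩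
  · show (Λ₁.r f, Λ₂.r v₂) = (w₁, v₂)
    rw [Λ₂.r_vertex hv₂, hf1]
  · show (Λ₁.s f, Λ₂.s v₂) = (x₁, v₂)
    rw [Λ₂.s_vertex hv₂, hf2]

end ProductLemmas

end KGraph

namespace KGraph

section MainLemmas

variable {k₁ k₂ : ℕ}

private lemma fin_cases_add (i : Fin (k₁ + k₂)) :
    (∃ j, i = Fin.castAdd k₂ j) ∨ (∃ j, i = Fin.natAdd k₁ j) :=
  Fin.addCases (fun j => Or.inl ⟨j, rfl⟩) (fun j => Or.inr ⟨j, rfl⟩) i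

variable (Λ₁ : KGraph k₁) (Λ₂ : KGraph k₂)

lemma sa_left (hP : (Λ₁.prod Λ₂).StronglyAperiodic) (h₂s : Λ₂.NoSources) :
    Λ₁.StronglyAperiodic := by
  intro H₁ hV₁ hH₁ hS₁ hne₁ v₁ hv₁ hv₁H m₁ n₁ hmn₁
  obtain ⟨v₂, hv₂⟩ : ∃ v₂, Λ₂.IsVertex v₂ := ⟨Λ₂.r Λ₂.nonempty.some, Λ₂.d_r _⟩
  have hVH : ∀ p ∈ {p : (Λ₁.prod Λ₂).Path | p.1 ∈ H₁ ∧ Λ₂.IsVertex p.2},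
      (Λ₁.prod Λ₂).IsVertex p := by
    rintro p ⟨h1, h2⟩
    exact (prod_isVertex_iff Λ₁ Λ₂ p).mpr ⟨hV₁ _ h1, h2⟩
  have hHH : (Λ₁.prod Λ₂).Hereditary {p | p.1 ∈ H₁ ∧ Λ₂.IsVertex p.2} := by
    rintro ⟨a, b⟩ ⟨h1, h2⟩ ⟨c, e⟩ ⟨⟨f, g⟩, hr, hs⟩
    have hr' : (Λ₁.r f, Λ₂.r g) = ((a, b) : Λ₁.Path × Λ₂.Path) := hr
    have hs' : (Λ₁.s f, Λ₂.s g) = ((c, e) : Λ₁.Path × Λ₂.Path) := hs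
    refine ⟨hH₁ a h1 c ⟨f, congrArg Prod.fst hr', congrArg Prod.fst hs'⟩, ?_⟩
    have he : Λ₂.s g = e := congrArg Prod.snd hs'
    show Λ₂.IsVertex e
    rw [← he]
    exact Λ₂.d_s g
  have hSH : (Λ₁.prod Λ₂).Saturated {p | p.1 ∈ H₁ ∧ Λ₂.IsVertex p.2} := by
    rintro ⟨a, b⟩ hab ⟨⟨mu1, mu2⟩, hmu⟩ ⟨i, hi⟩
    obtain ⟨ha, hb⟩ := (prod_isVertex_iff Λ₁ Λ₂ _).mp hab
    have hmu' : (Λ₁.r mu1, Λ₂.r mu2) = ((a, b) : Λ₁.Path × Λ₂.Path) := hmu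
    have hb' : Λ₂.d b = 0 := hb
    have ha' : Λ₁.d a = 0 := ha
    rcases fin_cases_add i with ⟨j, rfl⟩ | ⟨j, rfl⟩
    · refine ⟨hS₁ a ha ⟨mu1, congrArg Prod.fst hmu'⟩ ⟨j, fun f hrf hdf => ?_⟩, hb⟩
      have hmem := hi (f, b) (show (Λ₁.r f, Λ₂.r b) = ((a, b) : Λ₁.Path × Λ₂.Path) by
          rw [hrf, Λ₂.r_vertex hb])
        (show Fin.append (Λ₁.d f) (Λ₂.d b) = eVec (k₁ + k₂) (Fin.castAdd k₂ j) by
          rw [hdf, hb', eVec_castAdd])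
      exact hmem.1
    · obtain ⟨g, hrg, hdg⟩ := h₂s b hb j
      have hmem := hi (a, g) (show (Λ₁.r a, Λ₂.r g) = ((a, b) : Λ₁.Path × Λ₂.Path) by
          rw [hrg, Λ₁.r_vertex ha])
        (show Fin.append (Λ₁.d a) (Λ₂.d g) = eVec (k₁ + k₂) (Fin.natAdd k₁ j) by
          rw [hdg, ha', eVec_natAdd])
      have hsa : Λ₁.s a ∈ H₁ := hmem.1
      rw [Λ₁.s_vertex ha] at hsa
      exact ⟨hsa, hb⟩
  have hneH : {p : (Λ₁.prod Λ₂).Path | p.1 ∈ H₁ ∧ Λ₂.IsVertex p.2} ≠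
      {p | (Λ₁.prod Λ₂).IsVertex p} := by
    intro he
    have hmem : ((v₁, v₂) : (Λ₁.prod Λ₂).Path) ∈ {p | (Λ₁.prod Λ₂).IsVertex p} :=
      (prod_isVertex_iff Λ₁ Λ₂ _).mpr ⟨hv₁, hv₂⟩
    rw [← he] at hmem
    exact hv₁H hmem.1
  have hq := hP _ hVH hHH hSH hneH (v₁, v₂) ((prod_isVertex_iff Λ₁ Λ₂ _).mpr ⟨hv₁, hv₂⟩)
    (fun hmem => hv₁H hmem.1)
  have hmn : Fin.append m₁ (0 : Fin k₂ → ℕ) ≠ Fin.append n₁ 0 := fun h =>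
    hmn₁ (by rw [← res1_append m₁ (0 : Fin k₂ → ℕ), h, res1_append])
  obtain ⟨lam, hrl, hsl, hle, hseg⟩ := hq _ _ hmn
  obtain ⟨l1, l2⟩ := lam
  have hrl' : (Λ₁.r l1, Λ₂.r l2) = ((v₁, v₂) : Λ₁.Path × Λ₂.Path) := hrl
  have hsl1 : Λ₁.s l1 ∉ H₁ := fun hmem => hsl ⟨hmem, Λ₂.d_s l2⟩
  have hd1 : m₁ ⊔ n₁ ≤ Λ₁.d l1 := by
    intro i
    have h : (Fin.append m₁ 0 ⊔ Fin.append n₁ 0) (Fin.castAdd k₂ i) ≤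
        (Λ₁.prod Λ₂).d (l1, l2) (Fin.castAdd k₂ i) := hle _
    simp only [Pi.sup_apply, prod_d, Fin.append_left] at h
    simpa [Pi.sup_apply, show ∀ i, (Λ₁.prod Λ₂).d (l1, l2) (Fin.castAdd k₂ i) = Λ₁.d l1 i from fun i => Fin.append_left _ _ i] using h
  have side : ∀ q₁ : Fin k₁ → ℕ, q₁ ≤ m₁ ⊔ n₁ →
      (Λ₁.prod Λ₂).seg (l1, l2) (Fin.append q₁ 0)
        (Fin.append q₁ 0 + (Λ₁.prod Λ₂).d (l1, l2) -
          (Fin.append m₁ 0 ⊔ Fin.append n₁ 0)) =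
      (Λ₁.seg l1 q₁ (q₁ + Λ₁.d l1 - (m₁ ⊔ n₁)), Λ₂.seg l2 0 (Λ₂.d l2)) := by
    intro q₁ hq₁
    have hb1 : res1 k₁ k₂ (Fin.append q₁ 0 + (Λ₁.prod Λ₂).d (l1, l2) -
        (Fin.append m₁ 0 ⊔ Fin.append n₁ 0)) = q₁ + Λ₁.d l1 - (m₁ ⊔ n₁) := by
      funext i
      simp [res1, prod_d, Fin.append_left, show ∀ i, (Λ₁.prod Λ₂).d (l1, l2) (Fin.castAdd k₂ i) = Λ₁.d l1 i from fun i => Fin.append_left _ _ i]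
    have hb2 : res2 k₁ k₂ (Fin.append q₁ 0 + (Λ₁.prod Λ₂).d (l1, l2) -
        (Fin.append m₁ 0 ⊔ Fin.append n₁ 0)) = Λ₂.d l2 := by
      funext j
      simp [res2, prod_d, Fin.append_right, show ∀ j, (Λ₁.prod Λ₂).d (l1, l2) (Fin.natAdd k₁ j) = Λ₂.d l2 j from fun j => Fin.append_right _ _ j]
    have ha1 : q₁ ≤ q₁ + Λ₁.d l1 - (m₁ ⊔ n₁) := by
      intro i
      have h1 : q₁ i ≤ m₁ i ⊔ n₁ i := hq₁ i
      have h2 : m₁ i ⊔ n₁ i ≤ Λ₁.d l1 i := hd1 i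
      simp only [Pi.add_apply, Pi.sub_apply, Pi.sup_apply ] at h1 h2 ⊢
      omega
    have ha2 : q₁ + Λ₁.d l1 - (m₁ ⊔ n₁) ≤ Λ₁.d l1 := by
      intro i
      have h1 : q₁ i ≤ m₁ i ⊔ n₁ i := hq₁ i
      have h2 : m₁ i ⊔ n₁ i ≤ Λ₁.d l1 i := hd1 i
      simp only [Pi.add_apply, Pi.sub_apply, Pi.sup_apply ] at h1 h2 ⊢
      omega
    have ha3 : res2 k₁ k₂ (Fin.append q₁ 0) ≤ Λ₂.d l2 := by
      rw [res2_append]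
      intro j
      exact Nat.zero_le _
    rw [prod_seg Λ₁ Λ₂ l1 l2 _ _ (by rw [res1_append, hb1]; exact ha1)
      (by rw [hb1]; exact ha2) (by rw [hb2]; exact ha3) (le_of_eq hb2),
      res1_append, res2_append, hb1, hb2]
  refine ⟨l1, congrArg Prod.fst hrl', hsl1, hd1, fun hcon => hseg ?_⟩
  rw [side m₁ le_sup_left, side n₁ le_sup_right, hcon]

lemma sa_right (hP : (Λ₁.prod Λ₂).StronglyAperiodic) (h₁s : Λ₁.NoSources) :
    Λ₂.StronglyAperiodic := by
  intro H₂ hV₂ hH₂ hS₂ hne₂ v₂ hv₂ hv₂H m₂ n₂ hmn₂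
  obtain ⟨v₁, hv₁⟩ : ∃ v₁, Λ₁.IsVertex v₁ := ⟨Λ₁.r Λ₁.nonempty.some, Λ₁.d_r _⟩
  have hVH : ∀ p ∈ {p : (Λ₁.prod Λ₂).Path | Λ₁.IsVertex p.1 ∧ p.2 ∈ H₂},
      (Λ₁.prod Λ₂).IsVertex p := by
    rintro p ⟨h1, h2⟩
    exact (prod_isVertex_iff Λ₁ Λ₂ p).mpr ⟨h1, hV₂ _ h2⟩
  have hHH : (Λ₁.prod Λ₂).Hereditary {p | Λ₁.IsVertex p.1 ∧ p.2 ∈ H₂} := by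
    rintro ⟨a, b⟩ ⟨h1, h2⟩ ⟨c, e⟩ ⟨⟨f, g⟩, hr, hs⟩
    have hr' : (Λ₁.r f, Λ₂.r g) = ((a, b) : Λ₁.Path × Λ₂.Path) := hr
    have hs' : (Λ₁.s f, Λ₂.s g) = ((c, e) : Λ₁.Path × Λ₂.Path) := hs
    refine ⟨?_, hH₂ b h2 e ⟨g, congrArg Prod.snd hr', congrArg Prod.snd hs'⟩⟩
    have hc : Λ₁.s f = c := congrArg Prod.fst hs'
    show Λ₁.IsVertex c
    rw [← hc]
    exact Λ₁.d_s f
  have hSH : (Λ₁.prod Λ₂).Saturated {p | Λ₁.IsVertex p.1 ∧ p.2 ∈ H₂} := by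
    rintro ⟨a, b⟩ hab ⟨⟨mu1, mu2⟩, hmu⟩ ⟨i, hi⟩
    obtain ⟨ha, hb⟩ := (prod_isVertex_iff Λ₁ Λ₂ _).mp hab
    have hmu' : (Λ₁.r mu1, Λ₂.r mu2) = ((a, b) : Λ₁.Path × Λ₂.Path) := hmu
    have hb' : Λ₂.d b = 0 := hb
    have ha' : Λ₁.d a = 0 := ha
    rcases fin_cases_add i with ⟨j, rfl⟩ | ⟨j, rfl⟩
    · obtain ⟨f, hrf, hdf⟩ := h₁s a ha j
      have hmem := hi (f, b) (show (Λ₁.r f, Λ₂.r b) = ((a, b) : Λ₁.Path × Λ₂.Path) by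
          rw [hrf, Λ₂.r_vertex hb])
        (show Fin.append (Λ₁.d f) (Λ₂.d b) = eVec (k₁ + k₂) (Fin.castAdd k₂ j) by
          rw [hdf, hb', eVec_castAdd])
      have hsb : Λ₂.s b ∈ H₂ := hmem.2
      rw [Λ₂.s_vertex hb] at hsb
      exact ⟨ha, hsb⟩
    · refine ⟨ha, hS₂ b hb ⟨mu2, congrArg Prod.snd hmu'⟩ ⟨j, fun g hrg hdg => ?_⟩⟩
      have hmem := hi (a, g) (show (Λ₁.r a, Λ₂.r g) = ((a, b) : Λ₁.Path × Λ₂.Path) by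
          rw [hrg, Λ₁.r_vertex ha])
        (show Fin.append (Λ₁.d a) (Λ₂.d g) = eVec (k₁ + k₂) (Fin.natAdd k₁ j) by
          rw [hdg, ha', eVec_natAdd])
      exact hmem.2
  have hneH : {p : (Λ₁.prod Λ₂).Path | Λ₁.IsVertex p.1 ∧ p.2 ∈ H₂} ≠
      {p | (Λ₁.prod Λ₂).IsVertex p} := by
    intro he
    have hmem : ((v₁, v₂) : (Λ₁.prod Λ₂).Path) ∈ {p | (Λ₁.prod Λ₂).IsVertex p} :=
      (prod_isVertex_iff Λ₁ Λ₂ _).mpr ⟨hv₁, hv₂⟩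
    rw [← he] at hmem
    exact hv₂H hmem.2
  have hq := hP _ hVH hHH hSH hneH (v₁, v₂) ((prod_isVertex_iff Λ₁ Λ₂ _).mpr ⟨hv₁, hv₂⟩)
    (fun hmem => hv₂H hmem.2)
  have hmn : Fin.append (0 : Fin k₁ → ℕ) m₂ ≠ Fin.append (0 : Fin k₁ → ℕ) n₂ := fun h =>
    hmn₂ (by rw [← res2_append (0 : Fin k₁ → ℕ) m₂, h, res2_append])
  obtain ⟨lam, hrl, hsl, hle, hseg⟩ := hq _ _ hmn
  obtain ⟨l1, l2⟩ := lam
  have hrl' : (Λ₁.r l1, Λ₂.r l2) = ((v₁, v₂) : Λ₁.Path × Λ₂.Path) := hrl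
  have hsl2 : Λ₂.s l2 ∉ H₂ := fun hmem => hsl ⟨Λ₁.d_s l1, hmem⟩
  have hd2 : m₂ ⊔ n₂ ≤ Λ₂.d l2 := by
    intro j
    have h : (Fin.append (0 : Fin k₁ → ℕ) m₂ ⊔ Fin.append (0 : Fin k₁ → ℕ) n₂) (Fin.natAdd k₁ j) ≤
        (Λ₁.prod Λ₂).d (l1, l2) (Fin.natAdd k₁ j) := hle _
    simp only [Pi.sup_apply, prod_d, Fin.append_right] at h
    simpa [Pi.sup_apply, show ∀ j, (Λ₁.prod Λ₂).d (l1, l2) (Fin.natAdd k₁ j) = Λ₂.d l2 j from fun j => Fin.append_right _ _ j] using h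
  have side : ∀ q₂ : Fin k₂ → ℕ, q₂ ≤ m₂ ⊔ n₂ →
      (Λ₁.prod Λ₂).seg (l1, l2) (Fin.append (0 : Fin k₁ → ℕ) q₂)
        (Fin.append (0 : Fin k₁ → ℕ) q₂ + (Λ₁.prod Λ₂).d (l1, l2) -
          (Fin.append (0 : Fin k₁ → ℕ) m₂ ⊔ Fin.append (0 : Fin k₁ → ℕ) n₂)) =
      (Λ₁.seg l1 0 (Λ₁.d l1), Λ₂.seg l2 q₂ (q₂ + Λ₂.d l2 - (m₂ ⊔ n₂))) := by
    intro q₂ hq₂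
    have hb2 : res2 k₁ k₂ (Fin.append (0 : Fin k₁ → ℕ) q₂ + (Λ₁.prod Λ₂).d (l1, l2) -
        (Fin.append (0 : Fin k₁ → ℕ) m₂ ⊔ Fin.append (0 : Fin k₁ → ℕ) n₂)) = q₂ + Λ₂.d l2 - (m₂ ⊔ n₂) := by
      funext j
      simp [res2, prod_d, Fin.append_right, show ∀ j, (Λ₁.prod Λ₂).d (l1, l2) (Fin.natAdd k₁ j) = Λ₂.d l2 j from fun j => Fin.append_right _ _ j]
    have hb1 : res1 k₁ k₂ (Fin.append (0 : Fin k₁ → ℕ) q₂ + (Λ₁.prod Λ₂).d (l1, l2) -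
        (Fin.append (0 : Fin k₁ → ℕ) m₂ ⊔ Fin.append (0 : Fin k₁ → ℕ) n₂)) = Λ₁.d l1 := by
      funext i
      simp [res1, prod_d, Fin.append_left, show ∀ i, (Λ₁.prod Λ₂).d (l1, l2) (Fin.castAdd k₂ i) = Λ₁.d l1 i from fun i => Fin.append_left _ _ i]
    have ha1 : q₂ ≤ q₂ + Λ₂.d l2 - (m₂ ⊔ n₂) := by
      intro j
      have h1 : q₂ j ≤ m₂ j ⊔ n₂ j := hq₂ j
      have h2 : m₂ j ⊔ n₂ j ≤ Λ₂.d l2 j := hd2 j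
      simp only [Pi.add_apply, Pi.sub_apply, Pi.sup_apply ] at h1 h2 ⊢
      omega
    have ha2 : q₂ + Λ₂.d l2 - (m₂ ⊔ n₂) ≤ Λ₂.d l2 := by
      intro j
      have h1 : q₂ j ≤ m₂ j ⊔ n₂ j := hq₂ j
      have h2 : m₂ j ⊔ n₂ j ≤ Λ₂.d l2 j := hd2 j
      simp only [Pi.add_apply, Pi.sub_apply, Pi.sup_apply ] at h1 h2 ⊢
      omega
    have ha3 : res1 k₁ k₂ (Fin.append (0 : Fin k₁ → ℕ) q₂) ≤ Λ₁.d l1 := by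
      rw [res1_append]
      intro i
      exact Nat.zero_le _
    rw [prod_seg Λ₁ Λ₂ l1 l2 _ _ (by rw [hb1]; exact ha3) (le_of_eq hb1)
      (by rw [res2_append, hb2]; exact ha1) (by rw [hb2]; exact ha2),
      res1_append, res2_append, hb1, hb2]
  refine ⟨l2, congrArg Prod.snd hrl', hsl2, hd2, fun hcon => hseg ?_⟩
  rw [side m₂ le_sup_left, side n₂ le_sup_right, hcon]

lemma sa_prod (h₁ : Λ₁.StronglyAperiodic) (h₂ : Λ₂.StronglyAperiodic) :
    (Λ₁.prod Λ₂).StronglyAperiodic := by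
  intro H hV hH hS hne v hv hvH m n hmn
  obtain ⟨v₁, v₂⟩ := v
  obtain ⟨hv₁, hv₂⟩ := (prod_isVertex_iff Λ₁ Λ₂ _).mp hv
  have hcase : res1 k₁ k₂ m ≠ res1 k₁ k₂ n ∨ res2 k₁ k₂ m ≠ res2 k₁ k₂ n := by
    by_contra hc
    push_neg at hc
    apply hmn
    funext x
    rcases fin_cases_add x with ⟨j, rfl⟩ | ⟨j, rfl⟩
    · exact congrFun hc.1 j
    · exact congrFun hc.2 j
  rcases hcase with hc1 | hc2
  · -- the first coordinates of m and n differ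
    have hsat2 := slice2_saturated Λ₁ Λ₂ hS hv₁
    have hv₂S : v₂ ∉ {w₂ | ((v₁, w₂) : (Λ₁.prod Λ₂).Path) ∈ H} := hvH
    obtain ⟨l2, hrl2, hdl2, hsl2⟩ :=
      Λ₂.exists_path_avoid hsat2 hv₂ hv₂S (res2 k₁ k₂ m ⊔ res2 k₁ k₂ n)
    have hw₂ : Λ₂.IsVertex (Λ₂.s l2) := Λ₂.d_s l2
    have hsat1 := slice1_saturated Λ₁ Λ₂ hS hw₂
    have hher1 := slice1_hereditary Λ₁ Λ₂ hH hw₂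
    have hvert1 : ∀ w ∈ {w₁ | ((w₁, Λ₂.s l2) : (Λ₁.prod Λ₂).Path) ∈ H}, Λ₁.IsVertex w :=
      fun w hw => ((prod_isVertex_iff Λ₁ Λ₂ _).mp (hV _ hw)).1
    have hne1 : {w₁ | ((w₁, Λ₂.s l2) : (Λ₁.prod Λ₂).Path) ∈ H} ≠ {w | Λ₁.IsVertex w} := by
      intro he
      have hmm : v₁ ∈ {w₁ | ((w₁, Λ₂.s l2) : (Λ₁.prod Λ₂).Path) ∈ H} := by
        rw [he]; exact hv₁
      exact hsl2 hmm
    obtain ⟨l1, hrl1, hsl1, hd1, hseg1⟩ := h₁ _ hvert1 hher1 hsat1 hne1 v₁ hv₁ hsl2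
      (res1 k₁ k₂ m) (res1 k₁ k₂ n) hc1
    have side : ∀ q : Fin (k₁ + k₂) → ℕ, res1 k₁ k₂ q ≤ res1 k₁ k₂ m ⊔ res1 k₁ k₂ n →
        res2 k₁ k₂ q ≤ res2 k₁ k₂ m ⊔ res2 k₁ k₂ n →
        (Λ₁.prod Λ₂).seg (l1, l2) q (q + (Λ₁.prod Λ₂).d (l1, l2) - (m ⊔ n)) =
        (Λ₁.seg l1 (res1 k₁ k₂ q)
          (res1 k₁ k₂ q + Λ₁.d l1 - (res1 k₁ k₂ m ⊔ res1 k₁ k₂ n)),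
         Λ₂.seg l2 (res2 k₁ k₂ q) (res2 k₁ k₂ q)) := by
      intro q hq1 hq2
      have hb1 : res1 k₁ k₂ (q + (Λ₁.prod Λ₂).d (l1, l2) - (m ⊔ n)) =
          res1 k₁ k₂ q + Λ₁.d l1 - (res1 k₁ k₂ m ⊔ res1 k₁ k₂ n) := by
        funext i
        simp [res1, prod_d, Fin.append_left, show ∀ i, (Λ₁.prod Λ₂).d (l1, l2) (Fin.castAdd k₂ i) = Λ₁.d l1 i from fun i => Fin.append_left _ _ i]
      have hb2 : res2 k₁ k₂ (q + (Λ₁.prod Λ₂).d (l1, l2) - (m ⊔ n)) = res2 k₁ k₂ q := by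
        funext j
        simp only [res2, Pi.add_apply, Pi.sub_apply]
        have e : (Λ₁.prod Λ₂).d (l1, l2) (Fin.natAdd k₁ j) = (m ⊔ n) (Fin.natAdd k₁ j) := by
          have e1 : (Λ₁.prod Λ₂).d (l1, l2) (Fin.natAdd k₁ j) = Λ₂.d l2 j :=
            Fin.append_right _ _ j
          rw [e1, hdl2]
          rfl
        rw [e, Nat.add_sub_cancel]
      have ha1 : res1 k₁ k₂ q ≤
          res1 k₁ k₂ q + Λ₁.d l1 - (res1 k₁ k₂ m ⊔ res1 k₁ k₂ n) := by
        intro i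
        have h1 : res1 k₁ k₂ q i ≤ res1 k₁ k₂ m i ⊔ res1 k₁ k₂ n i := hq1 i
        have h2 : res1 k₁ k₂ m i ⊔ res1 k₁ k₂ n i ≤ Λ₁.d l1 i := hd1 i
        simp only [Pi.add_apply, Pi.sub_apply, Pi.sup_apply ] at h1 h2 ⊢
        omega
      have ha2 : res1 k₁ k₂ q + Λ₁.d l1 - (res1 k₁ k₂ m ⊔ res1 k₁ k₂ n) ≤ Λ₁.d l1 := by
        intro i
        have h1 : res1 k₁ k₂ q i ≤ res1 k₁ k₂ m i ⊔ res1 k₁ k₂ n i := hq1 i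
        have h2 : res1 k₁ k₂ m i ⊔ res1 k₁ k₂ n i ≤ Λ₁.d l1 i := hd1 i
        simp only [Pi.add_apply, Pi.sub_apply, Pi.sup_apply ] at h1 h2 ⊢
        omega
      have ha3 : res2 k₁ k₂ q ≤ Λ₂.d l2 := by
        rw [hdl2]; exact hq2
      rw [prod_seg Λ₁ Λ₂ l1 l2 q (q + (Λ₁.prod Λ₂).d (l1, l2) - (m ⊔ n))
        (by rw [hb1]; exact ha1) (by rw [hb1]; exact ha2)
        (le_of_eq hb2.symm) (by rw [hb2]; exact ha3), hb1, hb2]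
    refine ⟨(l1, l2), ?_, hsl1, ?_, ?_⟩
    · show (Λ₁.r l1, Λ₂.r l2) = ((v₁, v₂) : Λ₁.Path × Λ₂.Path)
      rw [hrl1, hrl2]
    · intro x
      rcases fin_cases_add x with ⟨j, rfl⟩ | ⟨j, rfl⟩
      · have h1 : (res1 k₁ k₂ m ⊔ res1 k₁ k₂ n) j ≤ Λ₁.d l1 j := hd1 j
        have e : (Λ₁.prod Λ₂).d (l1, l2) (Fin.castAdd k₂ j) = Λ₁.d l1 j :=
          Fin.append_left _ _ j
        show (m ⊔ n) (Fin.castAdd k₂ j) ≤ (Λ₁.prod Λ₂).d (l1, l2) (Fin.castAdd k₂ j)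
        rw [e]
        exact h1
      · have e : (Λ₁.prod Λ₂).d (l1, l2) (Fin.natAdd k₁ j) = Λ₂.d l2 j :=
          Fin.append_right _ _ j
        show (m ⊔ n) (Fin.natAdd k₁ j) ≤ (Λ₁.prod Λ₂).d (l1, l2) (Fin.natAdd k₁ j)
        rw [e, hdl2]
        exact le_rfl
    · intro hcon
      rw [side m le_sup_left le_sup_left, side n le_sup_right le_sup_right] at hcon
      exact hseg1 (congrArg Prod.fst hcon)
  · -- the second coordinates of m and n differ
    have hsat1 := slice1_saturated Λ₁ Λ₂ hS hv₂
    have hv₁S : v₁ ∉ {w₁ | ((w₁, v₂) : (Λ₁.prod Λ₂).Path) ∈ H} := hvH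
    obtain ⟨l1, hrl1, hdl1, hsl1⟩ :=
      Λ₁.exists_path_avoid hsat1 hv₁ hv₁S (res1 k₁ k₂ m ⊔ res1 k₁ k₂ n)
    have hw₁ : Λ₁.IsVertex (Λ₁.s l1) := Λ₁.d_s l1
    have hsat2 := slice2_saturated Λ₁ Λ₂ hS hw₁
    have hher2 := slice2_hereditary Λ₁ Λ₂ hH hw₁
    have hvert2 : ∀ w ∈ {w₂ | ((Λ₁.s l1, w₂) : (Λ₁.prod Λ₂).Path) ∈ H}, Λ₂.IsVertex w :=
      fun w hw => ((prod_isVertex_iff Λ₁ Λ₂ _).mp (hV _ hw)).2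
    have hne2 : {w₂ | ((Λ₁.s l1, w₂) : (Λ₁.prod Λ₂).Path) ∈ H} ≠ {w | Λ₂.IsVertex w} := by
      intro he
      have hmm : v₂ ∈ {w₂ | ((Λ₁.s l1, w₂) : (Λ₁.prod Λ₂).Path) ∈ H} := by
        rw [he]; exact hv₂
      exact hsl1 hmm
    obtain ⟨l2, hrl2, hsl2, hd2, hseg2⟩ := h₂ _ hvert2 hher2 hsat2 hne2 v₂ hv₂ hsl1
      (res2 k₁ k₂ m) (res2 k₁ k₂ n) hc2
    have side : ∀ q : Fin (k₁ + k₂) → ℕ, res1 k₁ k₂ q ≤ res1 k₁ k₂ m ⊔ res1 k₁ k₂ n →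
        res2 k₁ k₂ q ≤ res2 k₁ k₂ m ⊔ res2 k₁ k₂ n →
        (Λ₁.prod Λ₂).seg (l1, l2) q (q + (Λ₁.prod Λ₂).d (l1, l2) - (m ⊔ n)) =
        (Λ₁.seg l1 (res1 k₁ k₂ q) (res1 k₁ k₂ q),
         Λ₂.seg l2 (res2 k₁ k₂ q)
          (res2 k₁ k₂ q + Λ₂.d l2 - (res2 k₁ k₂ m ⊔ res2 k₁ k₂ n))) := by
      intro q hq1 hq2
      have hb2 : res2 k₁ k₂ (q + (Λ₁.prod Λ₂).d (l1, l2) - (m ⊔ n)) =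
          res2 k₁ k₂ q + Λ₂.d l2 - (res2 k₁ k₂ m ⊔ res2 k₁ k₂ n) := by
        funext j
        simp [res2, prod_d, Fin.append_right, show ∀ j, (Λ₁.prod Λ₂).d (l1, l2) (Fin.natAdd k₁ j) = Λ₂.d l2 j from fun j => Fin.append_right _ _ j]
      have hb1 : res1 k₁ k₂ (q + (Λ₁.prod Λ₂).d (l1, l2) - (m ⊔ n)) = res1 k₁ k₂ q := by
        funext i
        simp only [res1, Pi.add_apply, Pi.sub_apply]
        have e : (Λ₁.prod Λ₂).d (l1, l2) (Fin.castAdd k₂ i) = (m ⊔ n) (Fin.castAdd k₂ i) := by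
          have e1 : (Λ₁.prod Λ₂).d (l1, l2) (Fin.castAdd k₂ i) = Λ₁.d l1 i :=
            Fin.append_left _ _ i
          rw [e1, hdl1]
          rfl
        rw [e, Nat.add_sub_cancel]
      have ha1 : res2 k₁ k₂ q ≤
          res2 k₁ k₂ q + Λ₂.d l2 - (res2 k₁ k₂ m ⊔ res2 k₁ k₂ n) := by
        intro j
        have h1 : res2 k₁ k₂ q j ≤ res2 k₁ k₂ m j ⊔ res2 k₁ k₂ n j := hq2 j
        have h2 : res2 k₁ k₂ m j ⊔ res2 k₁ k₂ n j ≤ Λ₂.d l2 j := hd2 j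
        simp only [Pi.add_apply, Pi.sub_apply, Pi.sup_apply ] at h1 h2 ⊢
        omega
      have ha2 : res2 k₁ k₂ q + Λ₂.d l2 - (res2 k₁ k₂ m ⊔ res2 k₁ k₂ n) ≤ Λ₂.d l2 := by
        intro j
        have h1 : res2 k₁ k₂ q j ≤ res2 k₁ k₂ m j ⊔ res2 k₁ k₂ n j := hq2 j
        have h2 : res2 k₁ k₂ m j ⊔ res2 k₁ k₂ n j ≤ Λ₂.d l2 j := hd2 j
        simp only [Pi.add_apply, Pi.sub_apply, Pi.sup_apply ] at h1 h2 ⊢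
        omega
      have ha3 : res1 k₁ k₂ q ≤ Λ₁.d l1 := by
        rw [hdl1]; exact hq1
      rw [prod_seg Λ₁ Λ₂ l1 l2 q (q + (Λ₁.prod Λ₂).d (l1, l2) - (m ⊔ n))
        (le_of_eq hb1.symm) (by rw [hb1]; exact ha3)
        (by rw [hb2]; exact ha1) (by rw [hb2]; exact ha2), hb1, hb2]
    refine ⟨(l1, l2), ?_, hsl2, ?_, ?_⟩
    · show (Λ₁.r l1, Λ₂.r l2) = ((v₁, v₂) : Λ₁.Path × Λ₂.Path)
      rw [hrl1, hrl2]
    · intro x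
      rcases fin_cases_add x with ⟨j, rfl⟩ | ⟨j, rfl⟩
      · have e : (Λ₁.prod Λ₂).d (l1, l2) (Fin.castAdd k₂ j) = Λ₁.d l1 j :=
          Fin.append_left _ _ j
        show (m ⊔ n) (Fin.castAdd k₂ j) ≤ (Λ₁.prod Λ₂).d (l1, l2) (Fin.castAdd k₂ j)
        rw [e, hdl1]
        exact le_rfl
      · have h1 : (res2 k₁ k₂ m ⊔ res2 k₁ k₂ n) j ≤ Λ₂.d l2 j := hd2 j
        have e : (Λ₁.prod Λ₂).d (l1, l2) (Fin.natAdd k₁ j) = Λ₂.d l2 j :=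
          Fin.append_right _ _ j
        show (m ⊔ n) (Fin.natAdd k₁ j) ≤ (Λ₁.prod Λ₂).d (l1, l2) (Fin.natAdd k₁ j)
        rw [e]
        exact h1
    · intro hcon
      rw [side m le_sup_left le_sup_left, side n le_sup_right le_sup_right] at hcon
      exact hseg2 (congrArg Prod.snd hcon)

end MainLemmas

end KGraph

/-- The cartesian product `Λ₁ × Λ₂` is strongly aperiodic iff both `Λ₁` and
`Λ₂` are strongly aperiodic. -/
theorem stmt9 {k₁ k₂ : ℕ} (Λ₁ : KGraph k₁) (Λ₂ : KGraph k₂)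
    (h₁f : Λ₁.RowFinite) (h₁s : Λ₁.NoSources)
    (h₂f : Λ₂.RowFinite) (h₂s : Λ₂.NoSources) :
    (Λ₁.prod Λ₂).StronglyAperiodic ↔
      (Λ₁.StronglyAperiodic ∧ Λ₂.StronglyAperiodic) := by
  constructor
  · intro hP
    exact ⟨KGraph.sa_left Λ₁ Λ₂ hP h₂s, KGraph.sa_right Λ₁ Λ₂ hP h₁s⟩
  · rintro ⟨h₁, h₂⟩
    exact KGraph.sa_prod Λ₁ Λ₂ h₁ h₂
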